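/- Assume $(b_n)$ is $q$-increasing, i.e., $b_{n-1}/b_n \leq q$ for all $n \geq 1$ and some $0 < q < 1$. Then $u_{n,k} \leq q^{k^2}/(q^2;q^2)_k$ for all $n,k \geq 0$, and consequently $U_n = \sum_k u_{n,k}^2 \leq (q^2;q^2)_\infty^{-2} \sum_{k=0}^\infty q^{2k^2}$, so $(U_n)$ is bounded. -/

import Mathlib

/-- The coefficients `u_{n,k}` of `x^n/(b_0⋯b_{n-1})` in the basis `P_{n-2k}`,
defined via their recurrence (`b_m = 0` for `m < 0`, `u_{n,k} = 0` for `k < 0`). -/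
noncomputable def usec (b : ℕ → ℝ) : ℕ → ℕ → ℝ
  | 0, 0 => 1
  | 0, _ + 1 => 0
  | n + 1, 0 => usec b n 0
  | n + 1, k + 1 =>
      ((if 2 * (k + 1) ≤ n then b (n - 2 * (k + 1)) else 0) * usec b n (k + 1) +
        (if 2 * (k + 1) ≤ n + 1 then b (n + 1 - 2 * (k + 1)) else 0) * usec b n k) / b n

/-- `U_n = s_{2n}/(b_0²⋯b_{n-1}²) = ∑_{k ≤ ⌊n/2⌋} u_{n,k}²`. -/
noncomputable def Useq (b : ℕ → ℝ) (n : ℕ) : ℝ :=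
  ∑ k ∈ Finset.range (n / 2 + 1), (usec b n k) ^ 2

lemma usec_nonneg (b : ℕ → ℝ) (hb : ∀ n, 0 < b n) : ∀ n k, 0 ≤ usec b n k := by
  intro n
  induction n with
  | zero =>
    intro k
    cases k with
    | zero => norm_num [usec]
    | succ k => simp [usec]
  | succ n ih =>
    intro k
    cases k with
    | zero => rw [usec]; exact ih 0
    | succ k =>
      rw [usec]
      apply div_nonneg _ (hb n).le
      have h1 : (0:ℝ) ≤ (if 2 * (k + 1) ≤ n then b (n - 2 * (k + 1)) else 0) := by
        split
        · exact (hb _).le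
        · exact le_rfl
      have h2 : (0:ℝ) ≤ (if 2 * (k + 1) ≤ n + 1 then b (n + 1 - 2 * (k + 1)) else 0) := by
        split
        · exact (hb _).le
        · exact le_rfl
      exact add_nonneg (mul_nonneg h1 (ih _)) (mul_nonneg h2 (ih _))

lemma b_pow_le (b : ℕ → ℝ) (q : ℝ) (hq0 : 0 < q)
    (hqinc : ∀ n : ℕ, 1 ≤ n → b (n - 1) ≤ q * b n) :
    ∀ m n : ℕ, m ≤ n → b (n - m) ≤ q ^ m * b n := by
  intro m
  induction m with
  | zero => intro n _; simp
  | succ m ih =>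
    intro n hmn
    have h1 : 1 ≤ n - m := by omega
    have : n - (m + 1) = (n - m) - 1 := by omega
    rw [this]
    calc b ((n - m) - 1) ≤ q * b (n - m) := hqinc _ h1
      _ ≤ q * (q ^ m * b n) := by
          exact mul_le_mul_of_nonneg_left (ih n (by omega)) hq0.le
      _ = q ^ (m + 1) * b n := by ring


/-- if `(b_n)` is `q`-increasing, then `u_{n,k} ≤ q^{k²}/(q²;q²)_k`
for all `n, k`, and `U_n ≤ (q²;q²)_∞⁻² ∑_k q^{2k²}`, so `(U_n)` is bounded. -/
theorem stmt7 (b : ℕ → ℝ) (q : ℝ) (hb : ∀ n, 0 < b n) (hq0 : 0 < q) (hq1 : q < 1)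
    (hqinc : ∀ n : ℕ, 1 ≤ n → b (n - 1) ≤ q * b n) :
    (∀ n k : ℕ, usec b n k ≤ q ^ (k ^ 2) / ∏ j ∈ Finset.range k, (1 - q ^ (2 * j + 2))) ∧
    (∀ n : ℕ, Useq b n ≤
      ((∏' j : ℕ, (1 - q ^ (2 * j + 2)))⁻¹) ^ 2 * ∑' k : ℕ, q ^ (2 * k ^ 2)) := by
  -- basic facts about the factors
  have hfac : ∀ j : ℕ, 0 < 1 - q ^ (2 * j + 2) := by
    intro j
    have : q ^ (2 * j + 2) < 1 := pow_lt_one₀ hq0.le hq1 (by omega)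
    linarith
  have hfac1 : ∀ j : ℕ, 1 - q ^ (2 * j + 2) ≤ 1 := by
    intro j
    have : 0 < q ^ (2 * j + 2) := pow_pos hq0 _
    linarith
  set P : ℕ → ℝ := fun k => ∏ j ∈ Finset.range k, (1 - q ^ (2 * j + 2)) with hP
  have hPpos : ∀ k, 0 < P k := fun k => Finset.prod_pos fun j _ => hfac j
  set c : ℕ → ℝ := fun k => q ^ (k ^ 2) / P k with hc
  have hcpos : ∀ k, 0 < c k := fun k => div_pos (pow_pos hq0 _) (hPpos k)
  -- key identity
  have hkey : ∀ k : ℕ, q ^ (2 * k + 2) * c (k + 1) + q ^ (2 * k + 1) * c k = c (k + 1) := by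
    intro k
    have hPsucc : P (k + 1) = P k * (1 - q ^ (2 * k + 2)) := Finset.prod_range_succ _ _
    have hx := hfac k
    have e1 : c (k + 1) = q ^ (2 * k + 1) * q ^ (k ^ 2) / (P k * (1 - q ^ (2 * k + 2))) := by
      rw [hc]
      simp only
      rw [hPsucc]
      congr 1
      rw [← pow_add]
      congr 1
      ring
    rw [e1, hc]
    simp only
    have hp := (hPpos k).ne'
    field_simp
    ring
  -- part 1
  have hmain : ∀ n k : ℕ, usec b n k ≤ c k := by
    intro n
    induction n with
    | zero =>
      intro k
      cases k with
      | zero => simp [usec, hc, hP]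
      | succ k => rw [usec]; exact (hcpos _).le
    | succ n ih =>
      intro k
      cases k with
      | zero => rw [usec]; exact ih 0
      | succ k =>
        rw [usec]
        rw [div_le_iff₀ (hb n)]
        have hA : (if 2 * (k + 1) ≤ n then b (n - 2 * (k + 1)) else 0) ≤
            q ^ (2 * k + 2) * b n := by
          split
          · have := b_pow_le b q hq0 hqinc (2 * (k + 1)) n (by assumption)
            calc b (n - 2 * (k + 1)) ≤ q ^ (2 * (k + 1)) * b n := this
              _ = q ^ (2 * k + 2) * b n := by ring_nf
          · exact mul_nonneg (by positivity) (hb n).le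
        have hB : (if 2 * (k + 1) ≤ n + 1 then b (n + 1 - 2 * (k + 1)) else 0) ≤
            q ^ (2 * k + 1) * b n := by
          split
          · next h =>
            have := b_pow_le b q hq0 hqinc (2 * k + 1) n (by omega)
            have he : n + 1 - 2 * (k + 1) = n - (2 * k + 1) := by omega
            rw [he]
            exact this
          · exact mul_nonneg (by positivity) (hb n).le
        have hA0 : (0:ℝ) ≤ (if 2 * (k + 1) ≤ n then b (n - 2 * (k + 1)) else 0) := by
          split
          · exact (hb _).le
          · exact le_rfl
        have hB0 : (0:ℝ) ≤ (if 2 * (k + 1) ≤ n + 1 then b (n + 1 - 2 * (k + 1)) else 0) := by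
          split
          · exact (hb _).le
          · exact le_rfl
        have hu1 := usec_nonneg b hb n (k + 1)
        have hu2 := usec_nonneg b hb n k
        calc (if 2 * (k + 1) ≤ n then b (n - 2 * (k + 1)) else 0) * usec b n (k + 1) +
              (if 2 * (k + 1) ≤ n + 1 then b (n + 1 - 2 * (k + 1)) else 0) * usec b n k
            ≤ (q ^ (2 * k + 2) * b n) * c (k + 1) + (q ^ (2 * k + 1) * b n) * c k := by
              have t1 := mul_le_mul hA (ih (k + 1)) hu1
                (mul_nonneg (by positivity) (hb n).le)
              have t2 := mul_le_mul hB (ih k) hu2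
                (mul_nonneg (by positivity) (hb n).le)
              linarith
          _ = (q ^ (2 * k + 2) * c (k + 1) + q ^ (2 * k + 1) * c k) * b n := by ring
          _ = c (k + 1) * b n := by rw [hkey k]
  refine ⟨hmain, ?_⟩
  -- part 2: infinite product facts
  have hlogsum : Summable fun j : ℕ => Real.log (1 - q ^ (2 * j + 2)) := by
    rw [← summable_neg_iff]
    have hgeom : Summable fun j : ℕ => (1 - q ^ 2)⁻¹ * q ^ (2 * j + 2) := by
      apply Summable.mul_left
      have hs : Summable fun j : ℕ => q ^ 2 * (q ^ 2) ^ j := by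
        apply Summable.mul_left
        exact summable_geometric_of_lt_one (by positivity) (by nlinarith)
      apply hs.congr
      intro j
      rw [← pow_mul, ← pow_add]
      congr 1
      omega
    apply Summable.of_nonneg_of_le (fun j => ?_) (fun j => ?_) hgeom
    · have := Real.log_nonpos (by linarith [hfac j]) (hfac1 j)
      linarith
    · -- -log(1-x) ≤ x/(1-q²) for x = q^{2j+2} ≤ q²
      have hx : q ^ (2 * j + 2) ≤ q ^ 2 := pow_le_pow_of_le_one hq0.le hq1.le (by omega)
      have h1 : 0 < 1 - q ^ 2 := by
        have : q ^ 2 < 1 := pow_lt_one₀ hq0.le hq1 (by norm_num)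
        linarith
      have hlog : Real.log ((1 - q ^ (2 * j + 2))⁻¹) ≤ (1 - q ^ (2 * j + 2))⁻¹ - 1 :=
        Real.log_le_sub_one_of_pos (inv_pos.mpr (hfac j))
      rw [Real.log_inv] at hlog
      have h2 : (1 - q ^ (2 * j + 2))⁻¹ - 1 = q ^ (2 * j + 2) / (1 - q ^ (2 * j + 2)) := by
        rw [eq_div_iff (hfac j).ne', sub_mul, inv_mul_cancel₀ (hfac j).ne']
        ring
      rw [h2] at hlog
      have h3 : q ^ (2 * j + 2) / (1 - q ^ (2 * j + 2)) ≤ q ^ (2 * j + 2) / (1 - q ^ 2) := by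
        apply div_le_div_of_nonneg_left (pow_pos hq0 _).le h1
        linarith
      calc -Real.log (1 - q ^ (2 * j + 2)) ≤ q ^ (2 * j + 2) / (1 - q ^ 2) := hlog.trans h3
        _ = (1 - q ^ 2)⁻¹ * q ^ (2 * j + 2) := by ring
  set f : ℕ → ℝ := fun j => 1 - q ^ (2 * j + 2) with hf
  have hmult : Multipliable f :=
    Real.multipliable_of_summable_log (fun j => hfac j) hlogsum
  set M : ℝ := ∏' j : ℕ, f j with hM
  have hMexp : M = Real.exp (∑' j : ℕ, Real.log (f j)) := by
    exact (Real.hasProd_of_hasSum_log (f := f) (fun j => hfac j) hlogsum.hasSum).tprod_eq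
  have hMpos : 0 < M := hMexp ▸ Real.exp_pos _
  -- M ≤ P k
  have hMle : ∀ k, M ≤ P k := by
    intro k
    have ht : Filter.Tendsto (fun n => ∏ j ∈ Finset.range n, f j) Filter.atTop (nhds M) :=
      hmult.hasProd.tendsto_prod_nat
    apply le_of_tendsto ht
    filter_upwards [Filter.eventually_ge_atTop k] with n hn
    rw [← Finset.prod_range_mul_prod_Ico f hn]
    have h1 : ∏ j ∈ Finset.Ico k n, f j ≤ 1 :=
      Finset.prod_le_one (fun j _ => (hfac j).le) (fun j _ => hfac1 j)
    have h2 : (0:ℝ) ≤ ∏ j ∈ Finset.Ico k n, f j :=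
      Finset.prod_nonneg (fun j _ => (hfac j).le)
    have h3 : P k = ∏ j ∈ Finset.range k, f j := rfl
    rw [h3]
    nlinarith [Finset.prod_pos (fun j (_ : j ∈ Finset.range k) => hfac j)]
  -- summability of q^{2k²}
  have hsum : Summable fun k : ℕ => q ^ (2 * k ^ 2) := by
    apply Summable.of_nonneg_of_le (fun k => (pow_pos hq0 _).le) (fun k => ?_)
      (summable_geometric_of_lt_one hq0.le hq1)
    exact pow_le_pow_of_le_one hq0.le hq1.le (by nlinarith)
  intro n
  rw [Useq]
  calc ∑ k ∈ Finset.range (n / 2 + 1), (usec b n k) ^ 2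
      ≤ ∑ k ∈ Finset.range (n / 2 + 1), (M⁻¹) ^ 2 * q ^ (2 * k ^ 2) := by
        apply Finset.sum_le_sum
        intro k _
        have h1 : usec b n k ≤ c k := hmain n k
        have h2 : (usec b n k) ^ 2 ≤ (c k) ^ 2 :=
          pow_le_pow_left₀ (usec_nonneg b hb n k) h1 2
        apply h2.trans
        have h3 : c k ≤ M⁻¹ * q ^ (k ^ 2) := by
          rw [hc]
          simp only
          rw [div_le_iff₀ (hPpos k)]
          calc q ^ (k ^ 2) = M⁻¹ * q ^ (k ^ 2) * M := by field_simp
            _ ≤ M⁻¹ * q ^ (k ^ 2) * P k := by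
                apply mul_le_mul_of_nonneg_left (hMle k)
                positivity
        calc (c k) ^ 2 ≤ (M⁻¹ * q ^ (k ^ 2)) ^ 2 :=
              pow_le_pow_left₀ (hcpos k).le h3 2
          _ = (M⁻¹) ^ 2 * q ^ (2 * k ^ 2) := by
              rw [mul_pow, ← pow_mul]
              ring_nf
    _ = (M⁻¹) ^ 2 * ∑ k ∈ Finset.range (n / 2 + 1), q ^ (2 * k ^ 2) := by
        rw [Finset.mul_sum]
    _ ≤ (M⁻¹) ^ 2 * ∑' k : ℕ, q ^ (2 * k ^ 2) := by
        apply mul_le_mul_of_nonneg_left _ (by positivity)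
        exact Summable.sum_le_tsum _ (fun k _ => (pow_pos hq0 _).le) hsum
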